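/- Let a, c, K_W, κ be reals with K_W > 0, κ > 0, c ∉ {−1, 0, 1}, c ≠ a, and let g = K_W(2a − c + a²c³ − 2a²c) + cκ(c² − 1)², K* = g/(c(c² − 1)(a − c)²), Λ* = K_W(a − c)²(1 − ac)/g, K_Z* = (cκ(c² − 1)g − K_W²(a − c)²(1 − ac)²)/(c(c² − 1)g). If g ≠ 0, then ((Λ* + c − a)² K* + K_Z* + K_W)/K_W = (cK_W(c − 2a + a²c) + c²κ(c² − 1))/(K_W(c² − 1)), i.e., the closed-form capacity expression (1/2)log((Λ* + c − a)² K* + K_Z* + K_W)/K_W) equals (1/2)log((cK_W(c − 2a + a²c) + c²κ(c² − 1))/(K_W(c² − 1))). -/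

import Mathlib

/-- The closed-form capacity expression simplifies as claimed in Theorem 5. -/
theorem capacity_closed_form_identity
    (a c KW κ : ℝ) (hKW : 0 < KW) (hκ : 0 < κ)
    (hcm1 : c ≠ -1) (hc0 : c ≠ 0) (hc1 : c ≠ 1) (hca : c ≠ a)
    (g : ℝ) (hg_def : g = KW * (2*a - c + a^2*c^3 - 2*a^2*c) + c*κ*(c^2 - 1)^2)
    (hg : g ≠ 0) :
    let Kstar := g / (c * (c^2 - 1) * (a - c)^2)
    let Λstar := KW * (a - c)^2 * (1 - a*c) / g
    let KZstar := (c*κ*(c^2 - 1)*g - KW^2*(a - c)^2*(1 - a*c)^2) / (c*(c^2 - 1)*g)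
    ((Λstar + c - a)^2 * Kstar + KZstar + KW) / KW
      = (c*KW*(c - 2*a + a^2*c) + c^2*κ*(c^2 - 1)) / (KW*(c^2 - 1)) ∧
    (1/2) * Real.log (((Λstar + c - a)^2 * Kstar + KZstar + KW) / KW)
      = (1/2) * Real.log ((c*KW*(c - 2*a + a^2*c) + c^2*κ*(c^2 - 1)) / (KW*(c^2 - 1))) := by
  intro Kstar Λstar KZstar
  have hac : a - c ≠ 0 := sub_ne_zero.mpr (fun h => hca h.symm)
  have hc2 : c^2 - 1 ≠ 0 := by
    intro h
    have : (c - 1) * (c + 1) = 0 := by ring_nf; linarith [h]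
    rcases mul_eq_zero.mp this with h1 | h1
    · exact hc1 (by linarith)
    · exact hcm1 (by linarith)
  have hKW' : KW ≠ 0 := ne_of_gt hKW
  have key : ((Λstar + c - a)^2 * Kstar + KZstar + KW) / KW
      = (c*KW*(c - 2*a + a^2*c) + c^2*κ*(c^2 - 1)) / (KW*(c^2 - 1)) := by
    simp only [Kstar, Λstar, KZstar]
    field_simp
    rw [hg_def] at *
    ring
  exact ⟨key, by rw [key]⟩
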